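/- arXiv:2312.01382 — 6 statements merged into one kernel-verified Lean document; each statement's English description precedes it below -/
import Mathlib

section
/- The set g̃ of all matrices ι(T,K,V,U) is a Lie subalgebra of gl(2(ν+r),ℝ): it is a real subspace closed under the matrix commutator [A,B] = AB − BA. -/
open Matrix

/-- The block-matrix embedding `ι(T,K,V,U) ∈ Mat_{2(ν+r)}(ℝ)`, with row/column block
sizes `(r, ν, r, ν)`:
`[[Re K, 0, −Im K, Re Vᵀ], [Im V, T, Re V, U], [Im K, 0, Re K, −Im Vᵀ], [0,0,0,−Tᵀ]]`. -/
def iota (ν r : ℕ) (T : Matrix (Fin ν) (Fin ν) ℝ) (K : Matrix (Fin r) (Fin r) ℂ)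
    (V : Matrix (Fin ν) (Fin r) ℂ) (U : Matrix (Fin ν) (Fin ν) ℝ) :
    Matrix ((Fin r ⊕ Fin ν) ⊕ (Fin r ⊕ Fin ν)) ((Fin r ⊕ Fin ν) ⊕ (Fin r ⊕ Fin ν)) ℝ :=
  Matrix.fromBlocks
    (Matrix.fromBlocks (K.map Complex.re) 0 (V.map Complex.im) T)
    (Matrix.fromBlocks (-(K.map Complex.im)) (Vᵀ.map Complex.re) (V.map Complex.re) U)
    (Matrix.fromBlocks (K.map Complex.im) 0 0 0)
    (Matrix.fromBlocks (K.map Complex.re) (-(Vᵀ.map Complex.im)) 0 (-Tᵀ))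

/-- The Lie algebra `g̃`: the set of all matrices `ι(T,K,V,U)` with
`T ∈ gl(ν,ℝ)`, `K ∈ u(r)` (skew-Hermitian), `V ∈ Mat_{ν,r}(ℂ)`, `U ∈ Sym_ν(ℝ)`. -/
def gtilde (ν r : ℕ) :
    Set (Matrix ((Fin r ⊕ Fin ν) ⊕ (Fin r ⊕ Fin ν)) ((Fin r ⊕ Fin ν) ⊕ (Fin r ⊕ Fin ν)) ℝ) :=
  {X | ∃ T K V U, Kᴴ = -K ∧ U.IsSymm ∧ X = iota ν r T K V U}

/- ### Auxiliary lemmas -/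

/-- Build a complex matrix from real and imaginary parts. -/
def cplx {m n : Type*} (p q : Matrix m n ℝ) : Matrix m n ℂ :=
  p.map (Complex.ofReal) + q.map (fun x => x * Complex.I)

@[simp] lemma cplx_apply {m n : Type*} (p q : Matrix m n ℝ) (i : m) (j : n) :
    cplx p q i j = Complex.mk (p i j) (q i j) := by
  simp [cplx, Matrix.add_apply, Matrix.map_apply, Complex.ext_iff]

@[simp] lemma cplx_re {m n : Type*} (p q : Matrix m n ℝ) :
    (cplx p q).map Complex.re = p := by
  ext i j; simp

@[simp] lemma cplx_im {m n : Type*} (p q : Matrix m n ℝ) :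
    (cplx p q).map Complex.im = q := by
  ext i j; simp

lemma cplx_re_im {m n : Type*} (K : Matrix m n ℂ) :
    cplx (K.map Complex.re) (K.map Complex.im) = K := by
  ext i j; simp [Complex.ext_iff, Matrix.map_apply]

lemma cplx_skew {r : Type*} {a b : Matrix r r ℝ} (ha : aᵀ = -a) (hb : bᵀ = b) :
    (cplx a b)ᴴ = -(cplx a b) := by
  ext i j
  have h1 := congrFun (congrFun ha i) j
  have h2 := congrFun (congrFun hb i) j
  simp only [Matrix.transpose_apply, Matrix.neg_apply] at h1 h2
  simp [Matrix.conjTranspose_apply, Complex.ext_iff, h1, h2]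

lemma skew_re {r : Type*} {K : Matrix r r ℂ} (hK : Kᴴ = -K) :
    (K.map Complex.re)ᵀ = -(K.map Complex.re) := by
  ext i j
  have := congrFun (congrFun hK i) j
  simp only [Matrix.conjTranspose_apply, Matrix.neg_apply] at this
  have := congrArg Complex.re this
  simpa [Matrix.map_apply] using this

lemma skew_im {r : Type*} {K : Matrix r r ℂ} (hK : Kᴴ = -K) :
    (K.map Complex.im)ᵀ = K.map Complex.im := by
  ext i j
  have := congrFun (congrFun hK i) j
  simp only [Matrix.conjTranspose_apply, Matrix.neg_apply] at this
  have := congrArg Complex.im this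
  simpa [Matrix.map_apply] using this

lemma mapRe_add {m n : Type*} (A B : Matrix m n ℂ) :
    (A + B).map Complex.re = A.map Complex.re + B.map Complex.re := by
  ext i j; simp [Matrix.map_apply, Matrix.add_apply]

lemma mapIm_add {m n : Type*} (A B : Matrix m n ℂ) :
    (A + B).map Complex.im = A.map Complex.im + B.map Complex.im := by
  ext i j; simp [Matrix.map_apply, Matrix.add_apply]

lemma mapRe_smul {m n : Type*} (cc : ℝ) (A : Matrix m n ℂ) :
    (cc • A).map Complex.re = cc • A.map Complex.re := by
  ext i j; simp [Matrix.map_apply, Matrix.smul_apply, Complex.smul_re]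

lemma mapIm_smul {m n : Type*} (cc : ℝ) (A : Matrix m n ℂ) :
    (cc • A).map Complex.im = cc • A.map Complex.im := by
  ext i j; simp [Matrix.map_apply, Matrix.smul_apply, Complex.smul_im]

lemma fromBlocks_sub {l m n o α : Type*} [Sub α] (A : Matrix n l α) (B : Matrix n m α)
    (C : Matrix o l α) (D : Matrix o m α) (A' : Matrix n l α) (B' : Matrix n m α)
    (C' : Matrix o l α) (D' : Matrix o m α) :
    fromBlocks A B C D - fromBlocks A' B' C' D' =
      fromBlocks (A - A') (B - B') (C - C') (D - D') := by
  ext (i | i) (j | j) <;> rfl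

/-- The key commutator computation, stated in terms of real and imaginary parts. -/
lemma iota_cplx_comm (ν r : ℕ) (a b c d : Matrix (Fin r) (Fin r) ℝ)
    (p q s t : Matrix (Fin ν) (Fin r) ℝ) (T S U X : Matrix (Fin ν) (Fin ν) ℝ)
    (ha : aᵀ = -a) (hb : bᵀ = b) (hc : cᵀ = -c) (hd : dᵀ = d)
    (hU : Uᵀ = U) (hX : Xᵀ = X) :
    iota ν r T (cplx a b) (cplx p q) U * iota ν r S (cplx c d) (cplx s t) X -
      iota ν r S (cplx c d) (cplx s t) X * iota ν r T (cplx a b) (cplx p q) U =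
    iota ν r (T * S - S * T)
      (cplx (a * c - c * a - (b * d - d * b)) (a * d - d * a + (b * c - c * b)))
      (cplx (T * s - S * p + p * c - q * d - s * a + t * b)
            (T * t - S * q + p * d + q * c - s * b - t * a))
      (q * sᵀ - p * tᵀ - t * pᵀ + s * qᵀ + T * X + X * Tᵀ - U * Sᵀ - S * U) := by
  unfold iota
  simp only [Matrix.transpose_map, cplx_re, cplx_im,
    Matrix.transpose_sub, Matrix.transpose_add, Matrix.transpose_mul, Matrix.transpose_neg,
    Matrix.transpose_transpose, ha, hb, hc, hd, hU, hX,
    Matrix.fromBlocks_multiply, Matrix.fromBlocks_add, Matrix.fromBlocks_neg,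
    fromBlocks_sub, Matrix.fromBlocks_inj]
  repeat' apply And.intro
  all_goals simp only [Matrix.zero_mul, Matrix.mul_zero, smul_zero, zero_add, add_zero,
    Matrix.neg_mul, Matrix.mul_neg, Matrix.smul_mul, Matrix.mul_smul, smul_smul, neg_neg,
    neg_one_smul]
  all_goals abel

lemma iota_add (ν r : ℕ) (T T' : Matrix (Fin ν) (Fin ν) ℝ) (K K' : Matrix (Fin r) (Fin r) ℂ)
    (V V' : Matrix (Fin ν) (Fin r) ℂ) (U U' : Matrix (Fin ν) (Fin ν) ℝ) :
    iota ν r T K V U + iota ν r T' K' V' U' =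
      iota ν r (T + T') (K + K') (V + V') (U + U') := by
  unfold iota
  simp only [Matrix.transpose_map, mapRe_add, mapIm_add, Matrix.transpose_add,
    Matrix.fromBlocks_add, Matrix.fromBlocks_inj]
  repeat' apply And.intro
  all_goals first | exact True.intro | abel

lemma iota_smul (ν r : ℕ) (cc : ℝ) (T : Matrix (Fin ν) (Fin ν) ℝ)
    (K : Matrix (Fin r) (Fin r) ℂ) (V : Matrix (Fin ν) (Fin r) ℂ)
    (U : Matrix (Fin ν) (Fin ν) ℝ) :
    cc • iota ν r T K V U = iota ν r (cc • T) (cc • K) (cc • V) (cc • U) := by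
  unfold iota
  simp only [Matrix.transpose_map, mapRe_smul, mapIm_smul, Matrix.transpose_smul,
    Matrix.fromBlocks_smul, Matrix.fromBlocks_inj, smul_neg, smul_zero]
  repeat' apply And.intro
  all_goals rfl

lemma iota_zero (ν r : ℕ) : iota ν r 0 0 0 0 = 0 := by
  unfold iota
  have h1 : (0 : Matrix (Fin r) (Fin r) ℂ).map Complex.re = 0 := Matrix.map_zero _ rfl
  have h2 : (0 : Matrix (Fin r) (Fin r) ℂ).map Complex.im = 0 := Matrix.map_zero _ rfl
  have h3 : (0 : Matrix (Fin ν) (Fin r) ℂ).map Complex.re = 0 := Matrix.map_zero _ rfl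
  have h4 : (0 : Matrix (Fin ν) (Fin r) ℂ).map Complex.im = 0 := Matrix.map_zero _ rfl
  have h5 : ((0 : Matrix (Fin ν) (Fin r) ℂ))ᵀ.map Complex.re = 0 := by
    rw [Matrix.transpose_map, h3]; simp
  have h6 : ((0 : Matrix (Fin ν) (Fin r) ℂ))ᵀ.map Complex.im = 0 := by
    rw [Matrix.transpose_map, h4]; simp
  rw [h1, h2, h3, h4, h5, h6]
  simp [Matrix.fromBlocks_zero]

/-- `g̃` is a Lie subalgebra of `gl(2(ν+r),ℝ)`: a real subspace closed
under the matrix commutator `[A,B] = AB − BA`. -/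
theorem gtilde_isLieSubalgebra (ν r : ℕ) (hν : 0 < ν) (hr : 0 < r) :
    ∃ S : Submodule ℝ
        (Matrix ((Fin r ⊕ Fin ν) ⊕ (Fin r ⊕ Fin ν)) ((Fin r ⊕ Fin ν) ⊕ (Fin r ⊕ Fin ν)) ℝ),
      (S : Set _) = gtilde ν r ∧
      ∀ X ∈ gtilde ν r, ∀ Y ∈ gtilde ν r, X * Y - Y * X ∈ gtilde ν r := by
  refine ⟨{ carrier := gtilde ν r
            add_mem' := ?_
            zero_mem' := ?_
            smul_mem' := ?_ }, rfl, ?_⟩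
  · rintro A B ⟨T, K, V, U, hK, hU, rfl⟩ ⟨T', K', V', U', hK', hU', rfl⟩
    exact ⟨T + T', K + K', V + V', U + U', by
        rw [Matrix.conjTranspose_add, hK, hK']; abel, hU.add hU',
      iota_add ν r T T' K K' V V' U U'⟩
  · exact ⟨0, 0, 0, 0, by simp, Matrix.isSymm_zero, (iota_zero ν r).symm⟩
  · rintro cc A ⟨T, K, V, U, hK, hU, rfl⟩
    refine ⟨cc • T, cc • K, cc • V, cc • U, ?_, hU.smul cc, iota_smul ν r cc T K V U⟩
    rw [Matrix.conjTranspose_smul, hK, star_trivial, smul_neg]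
  · rintro A ⟨T, K, V, U, hK, hU, rfl⟩ B ⟨S, L, W, X, hL, hX, rfl⟩
    set a := K.map Complex.re
    set b := K.map Complex.im
    set c := L.map Complex.re
    set d := L.map Complex.im
    set p := V.map Complex.re
    set q := V.map Complex.im
    set s := W.map Complex.re
    set t := W.map Complex.im
    have ha : aᵀ = -a := skew_re hK
    have hb : bᵀ = b := skew_im hK
    have hc : cᵀ = -c := skew_re hL
    have hd : dᵀ = d := skew_im hL
    have hKe : K = cplx a b := (cplx_re_im K).symm
    have hLe : L = cplx c d := (cplx_re_im L).symm
    have hVe : V = cplx p q := (cplx_re_im V).symm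
    have hWe : W = cplx s t := (cplx_re_im W).symm
    refine ⟨T * S - S * T,
      cplx (a * c - c * a - (b * d - d * b)) (a * d - d * a + (b * c - c * b)),
      cplx (T * s - S * p + p * c - q * d - s * a + t * b)
           (T * t - S * q + p * d + q * c - s * b - t * a),
      q * sᵀ - p * tᵀ - t * pᵀ + s * qᵀ + T * X + X * Tᵀ - U * Sᵀ - S * U,
      ?_, ?_, ?_⟩
    · refine cplx_skew ?_ ?_
      · simp only [Matrix.transpose_sub, Matrix.transpose_mul, ha, hb, hc, hd]
        noncomm_ring
      · simp only [Matrix.transpose_add, Matrix.transpose_sub, Matrix.transpose_mul,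
          ha, hb, hc, hd]
        noncomm_ring
    · rw [Matrix.IsSymm]
      simp only [Matrix.transpose_sub, Matrix.transpose_add, Matrix.transpose_mul,
        Matrix.transpose_transpose, hU.eq, hX.eq]
      noncomm_ring
    · rw [hKe, hLe, hVe, hWe]
      exact iota_cplx_comm ν r a b c d p q s t T S U X ha hb hc hd hU.eq hX.eq
end

section
/- For all T, T' ∈ gl(ν,ℝ) and K, K' ∈ u(r), the matrix commutator satisfies [ι(T,K,0,0), ι(T',K',0,0)] = ι([T,T'], [K,K'], 0, 0); in particular, (T,K) ↦ ι(T,K,0,0) is an injective Lie algebra homomorphism from the product Lie algebra gl(ν,ℝ) × u(r) into gl(2(ν+r),ℝ). -/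
open Matrix

/-- `[ι(T,K,0,0), ι(T',K',0,0)] = ι([T,T'],[K,K'],0,0)`, and
`(T,K) ↦ ι(T,K,0,0)` is an injective Lie algebra homomorphism of `gl(ν,ℝ) × u(r)`
into `gl(2(ν+r),ℝ)`. -/
theorem iota_levi_bracket_and_injective (ν r : ℕ) (hν : 0 < ν) (hr : 0 < r) :
    (∀ (T T' : Matrix (Fin ν) (Fin ν) ℝ) (K K' : Matrix (Fin r) (Fin r) ℂ),
      Kᴴ = -K → K'ᴴ = -K' →
      iota ν r T K 0 0 * iota ν r T' K' 0 0 - iota ν r T' K' 0 0 * iota ν r T K 0 0 =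
        iota ν r (T * T' - T' * T) (K * K' - K' * K) 0 0) ∧
    (∀ (T T' : Matrix (Fin ν) (Fin ν) ℝ) (K K' : Matrix (Fin r) (Fin r) ℂ),
      Kᴴ = -K → K'ᴴ = -K' →
      iota ν r T K 0 0 = iota ν r T' K' 0 0 → T = T' ∧ K = K') := by
  constructor
  · intro T T' K K' _ _
    have hre : ∀ (A B : Matrix (Fin r) (Fin r) ℂ),
        (A * B).map Complex.re = A.map Complex.re * B.map Complex.re
          - A.map Complex.im * B.map Complex.im := by
      intro A B; ext i j
      simp [Matrix.mul_apply, Complex.mul_re, Finset.sum_sub_distrib]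
    have him : ∀ (A B : Matrix (Fin r) (Fin r) ℂ),
        (A * B).map Complex.im = A.map Complex.re * B.map Complex.im
          + A.map Complex.im * B.map Complex.re := by
      intro A B; ext i j
      simp [Matrix.mul_apply, Complex.mul_im, Finset.sum_add_distrib]
    have hsubre : (K * K' - K' * K).map Complex.re
        = (K * K').map Complex.re - (K' * K).map Complex.re := by
      ext i j; simp
    have hsubim : (K * K' - K' * K).map Complex.im
        = (K * K').map Complex.im - (K' * K).map Complex.im := by
      ext i j; simp
    simp only [iota, Matrix.fromBlocks_multiply,
      hsubre, hsubim, hre, him, Matrix.transpose_sub, Matrix.transpose_mul]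
    ext i j
    rcases i with (i|i)|(i|i) <;> rcases j with (j|j)|(j|j) <;>
      simp [Matrix.sub_apply, Matrix.add_apply, Matrix.neg_apply] <;> ring
  · intro T T' K K' _ _ h
    have h11 := congrArg Matrix.toBlocks₁₁ h
    have h21 := congrArg Matrix.toBlocks₂₁ h
    simp only [iota, Matrix.toBlocks_fromBlocks₁₁, Matrix.toBlocks_fromBlocks₂₁] at h11 h21
    have hre := congrArg Matrix.toBlocks₁₁ h11
    have hT := congrArg Matrix.toBlocks₂₂ h11
    have him := congrArg Matrix.toBlocks₁₁ h21
    simp only [Matrix.toBlocks_fromBlocks₁₁, Matrix.toBlocks_fromBlocks₂₂] at hre hT him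
    refine ⟨hT, ?_⟩
    ext i j
    apply Complex.ext
    · exact congrFun (congrFun hre i) j
    · exact congrFun (congrFun him i) j
end

section
/- For all V, V' ∈ Mat_{ν,r}(ℂ), the matrix commutator satisfies [ι(0,0,V,0), ι(0,0,V',0)] = ι(0, 0, 0, 4·Im Q(V,V')), where 4·Im Q(V,V') = Im(V·conj(V'ᵀ) + conj(V')·Vᵀ) is a real symmetric ν×ν matrix. -/
open Matrix

/-- The Hermitian map `Q(U,V) := (U·conj(Vᵀ) + conj(V)·Uᵀ)/4`. -/
noncomputable def Qmap (ν r : ℕ) (U V : Matrix (Fin ν) (Fin r) ℂ) :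
    Matrix (Fin ν) (Fin ν) ℂ :=
  (4 : ℂ)⁻¹ • (U * (V.map (starRingEnd ℂ))ᵀ + V.map (starRingEnd ℂ) * Uᵀ)

/-- `[ι(0,0,V,0), ι(0,0,V',0)] = ι(0,0,0, 4·Im Q(V,V'))`, where
`4·Im Q(V,V') = Im(V·conj(V'ᵀ) + conj(V')·Vᵀ)` is a real symmetric matrix. -/
theorem iota_heisenberg_bracket (ν r : ℕ) (hν : 0 < ν) (hr : 0 < r)
    (V V' : Matrix (Fin ν) (Fin r) ℂ) :
    iota ν r 0 0 V 0 * iota ν r 0 0 V' 0 - iota ν r 0 0 V' 0 * iota ν r 0 0 V 0 =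
      iota ν r 0 0 0 ((4 : ℝ) • (Qmap ν r V V').map Complex.im) ∧
    (4 : ℝ) • (Qmap ν r V V').map Complex.im =
      (V * (V'.map (starRingEnd ℂ))ᵀ + V'.map (starRingEnd ℂ) * Vᵀ).map Complex.im ∧
    ((4 : ℝ) • (Qmap ν r V V').map Complex.im).IsSymm := by
  have h2 : (4 : ℝ) • (Qmap ν r V V').map Complex.im =
      (V * (V'.map (starRingEnd ℂ))ᵀ + V'.map (starRingEnd ℂ) * Vᵀ).map Complex.im := by
    ext i j
    simp [Qmap, Complex.mul_im]
    ring
  refine ⟨?_, h2, ?_⟩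
  · rw [h2]
    ext (i|i) (j|j) <;> rcases i with i|i <;> rcases j with j|j <;>
      simp [iota, mul_apply, Fintype.sum_sum_type, Complex.add_im, Complex.mul_im,
        Finset.sum_sub_distrib, Finset.sum_add_distrib]
    ring
  · rw [h2]
    ext i j
    simp [Matrix.IsSymm, transpose_apply, mul_apply, Complex.add_im, Complex.mul_im]
    rw [← Finset.sum_add_distrib, ← Finset.sum_add_distrib]
    exact Finset.sum_congr rfl fun k _ => by ring
end

section
/- For ν ≥ 3 and r ≥ 2, the center of the Lie algebra g̃ is trivial: if X ∈ g̃ satisfies [X,Y] = 0 for all Y ∈ g̃, then X = 0. -/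
open Matrix

/-- for `ν ≥ 3` and `r ≥ 2` the center of `g̃` is trivial. -/
theorem gtilde_center_trivial (ν r : ℕ) (hν : 3 ≤ ν) (hr : 2 ≤ r) :
    ∀ X ∈ gtilde ν r, (∀ Y ∈ gtilde ν r, X * Y - Y * X = 0) → X = 0 := by
  rintro X ⟨T, K, V, U, hK, hU, rfl⟩ h
  -- Commutation with ι(1,0,0,0)
  have hY1 := h (iota ν r 1 0 0 0) ⟨1, 0, 0, 0, by simp, by simp [Matrix.IsSymm], rfl⟩
  have hVim : ∀ i k, (V i k).im = 0 := by
    intro i k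
    have h1 := congrFun (congrFun hY1 (Sum.inl (Sum.inr i))) (Sum.inl (Sum.inl k))
    simpa [iota, Matrix.mul_apply, Fintype.sum_sum_type, Matrix.fromBlocks,
      Matrix.one_apply] using h1
  have hVre : ∀ i k, (V i k).re = 0 := by
    intro i k
    have h1 := congrFun (congrFun hY1 (Sum.inl (Sum.inl k))) (Sum.inr (Sum.inr i))
    simpa [iota, Matrix.mul_apply, Fintype.sum_sum_type, Matrix.fromBlocks,
      Matrix.one_apply] using h1
  have hU0 : ∀ i j, U i j = 0 := by
    intro i j
    have h1 := congrFun (congrFun hY1 (Sum.inl (Sum.inr i))) (Sum.inr (Sum.inr j))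
    simp [iota, Matrix.mul_apply, Fintype.sum_sum_type, Matrix.fromBlocks,
      Matrix.one_apply] at h1
    linarith
  -- Commutation with ι(0,0,V',0)
  have hmemV : ∀ V' : Matrix (Fin ν) (Fin r) ℂ, iota ν r 0 0 V' 0 ∈ gtilde ν r :=
    fun V' => ⟨0, 0, V', 0, by simp, by simp [Matrix.IsSymm], rfl⟩
  have eq1 : ∀ (W : Matrix (Fin ν) (Fin r) ℝ) (i : Fin ν) (j : Fin r),
      ∑ x : Fin r, W i x * (K x j).im = 0 := by
    intro W i j
    have h1 := congrFun (congrFun (h _ (hmemV (W.map (fun x => (x : ℂ)))))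
      (Sum.inl (Sum.inr i))) (Sum.inl (Sum.inl j))
    simpa [iota, Matrix.mul_apply, Fintype.sum_sum_type, Matrix.fromBlocks] using h1
  have eq2 : ∀ (W : Matrix (Fin ν) (Fin r) ℝ) (i : Fin ν) (j : Fin r),
      ∑ x : Fin ν, T i x * W x j = ∑ x : Fin r, W i x * (K x j).re := by
    intro W i j
    have h1 := congrFun (congrFun (h _ (hmemV (W.map (fun x => Complex.I * x))))
      (Sum.inl (Sum.inr i))) (Sum.inl (Sum.inl j))
    simp [iota, Matrix.mul_apply, Fintype.sum_sum_type, Matrix.fromBlocks] at h1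
    linarith [h1]
  -- Imaginary part of K vanishes
  have hKim : ∀ b j, (K b j).im = 0 := by
    intro b j
    have i0 : Fin ν := ⟨0, by omega⟩
    have h1 := eq1 (Matrix.of fun _ x => if x = b then 1 else 0) i0 j
    simpa using h1
  -- The key equation relating T and Re K
  have eqTK : ∀ (i a : Fin ν) (b j : Fin r),
      T i a * (if j = b then (1:ℝ) else 0) = (if i = a then (1:ℝ) else 0) * (K b j).re := by
    intro i a b j
    have h1 := eq2 (Matrix.of fun x y => (if x = a then (1:ℝ) else 0) * (if y = b then 1 else 0))
      i j
    simpa [ite_mul, mul_ite, Finset.mul_sum] using h1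
  -- Re K is zero off the diagonal
  have hKre_off : ∀ b j : Fin r, b ≠ j → (K b j).re = 0 := by
    intro b j hbj
    have i0 : Fin ν := ⟨0, by omega⟩
    have h1 := eqTK i0 i0 b j
    simp [if_neg (fun hh : j = b => hbj hh.symm)] at h1
    linarith
  -- Diagonal of K has zero real part (skew-Hermitian)
  have hKre_diag : ∀ b : Fin r, (K b b).re = 0 := by
    intro b
    have h1 := congrFun (congrFun hK b) b
    have h2 : (starRingEnd ℂ) (K b b) = -(K b b) := by
      simpa [Matrix.conjTranspose_apply] using h1
    have := congrArg Complex.re h2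
    simp at this
    linarith
  have hKre : ∀ b j : Fin r, (K b j).re = 0 := by
    intro b j
    by_cases hbj : b = j
    · subst hbj; exact hKre_diag b
    · exact hKre_off b j hbj
  -- T vanishes
  have hT : ∀ i a : Fin ν, T i a = 0 := by
    intro i a
    have j0 : Fin r := ⟨0, by omega⟩
    have h1 := eqTK i a j0 j0
    simp [hKre] at h1
    exact h1
  -- Conclude
  ext x y
  rcases x with (x | x) | (x | x) <;> rcases y with (y | y) | (y | y) <;>
    simp [iota, Matrix.fromBlocks, hT, hKre, hKim, hVre, hVim, hU0,
      Matrix.transpose_apply]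
end

section
/- The map φ₀ : g̃ → g̃ defined by φ₀(ι(T,K,V,U)) := ι(T, conj(K), conj(V), −U) is a well-defined Lie algebra automorphism of g̃ and is an involution: φ₀ ∘ φ₀ = id. -/
open Matrix

lemma map_conj_re {m n : Type*} (A : Matrix m n ℂ) :
    (A.map (starRingEnd ℂ)).map Complex.re = A.map Complex.re := by
  ext i j; simp [Matrix.map_apply]

lemma map_conj_im {m n : Type*} (A : Matrix m n ℂ) :
    (A.map (starRingEnd ℂ)).map Complex.im = -(A.map Complex.im) := by
  ext i j; simp [Matrix.map_apply]

/-- the assignment `φ₀(ι(T,K,V,U)) := ι(T, conj K, conj V, −U)` gives a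
well-defined Lie algebra automorphism of `g̃` which is an involution. -/
theorem phi0_automorphism (ν r : ℕ) (hν : 0 < ν) (hr : 0 < r) :
    ∃ φ : Matrix ((Fin r ⊕ Fin ν) ⊕ (Fin r ⊕ Fin ν)) ((Fin r ⊕ Fin ν) ⊕ (Fin r ⊕ Fin ν)) ℝ →
        Matrix ((Fin r ⊕ Fin ν) ⊕ (Fin r ⊕ Fin ν)) ((Fin r ⊕ Fin ν) ⊕ (Fin r ⊕ Fin ν)) ℝ,
      (∀ (T : Matrix (Fin ν) (Fin ν) ℝ) (K : Matrix (Fin r) (Fin r) ℂ)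
          (V : Matrix (Fin ν) (Fin r) ℂ) (U : Matrix (Fin ν) (Fin ν) ℝ),
        Kᴴ = -K → U.IsSymm →
        φ (iota ν r T K V U) =
          iota ν r T (K.map (starRingEnd ℂ)) (V.map (starRingEnd ℂ)) (-U)) ∧
      (∀ X ∈ gtilde ν r, φ X ∈ gtilde ν r) ∧
      Set.BijOn φ (gtilde ν r) (gtilde ν r) ∧
      (∀ X ∈ gtilde ν r, ∀ Y ∈ gtilde ν r, φ (X + Y) = φ X + φ Y) ∧
      (∀ (c : ℝ), ∀ X ∈ gtilde ν r, φ (c • X) = c • φ X) ∧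
      (∀ X ∈ gtilde ν r, ∀ Y ∈ gtilde ν r,
        φ (X * Y - Y * X) = φ X * φ Y - φ Y * φ X) ∧
      (∀ X ∈ gtilde ν r, φ (φ X) = X) := by
  set J : Matrix ((Fin r ⊕ Fin ν) ⊕ (Fin r ⊕ Fin ν)) ((Fin r ⊕ Fin ν) ⊕ (Fin r ⊕ Fin ν)) ℝ :=
    fromBlocks (fromBlocks 1 0 0 (-1)) 0 0 (fromBlocks (-1) 0 0 1) with hJ
  have hJ2 : J * J = 1 := by
    simp [hJ, fromBlocks_multiply, Matrix.neg_mul, ← fromBlocks_one]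
  have hform : ∀ (T : Matrix (Fin ν) (Fin ν) ℝ) (K : Matrix (Fin r) (Fin r) ℂ)
      (V : Matrix (Fin ν) (Fin r) ℂ) (U : Matrix (Fin ν) (Fin ν) ℝ),
      J * iota ν r T K V U * J =
        iota ν r T (K.map (starRingEnd ℂ)) (V.map (starRingEnd ℂ)) (-U) := by
    intro T K V U
    simp only [iota, fromBlocks_multiply, hJ, Matrix.mul_neg, Matrix.neg_mul,
      Matrix.mul_zero, Matrix.zero_mul, Matrix.mul_one, Matrix.one_mul, neg_neg, neg_zero,
      map_conj_re, map_conj_im, Matrix.transpose_map, Matrix.transpose_neg]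
    simp [fromBlocks_multiply, Matrix.mul_neg, Matrix.neg_mul, Matrix.transpose_map]
  have hinv : ∀ X, J * (J * X * J) * J = X := by
    intro X
    rw [← mul_assoc, ← mul_assoc, hJ2, one_mul, mul_assoc, hJ2, mul_one]
  have hmem : ∀ X ∈ gtilde ν r, J * X * J ∈ gtilde ν r := by
    rintro X ⟨T, K, V, U, hK, hU, rfl⟩
    refine ⟨T, K.map (starRingEnd ℂ), V.map (starRingEnd ℂ), -U, ?_, ?_, hform T K V U⟩
    · ext i j
      have h := congrFun (congrFun hK j) i
      simp only [conjTranspose_apply, Matrix.neg_apply] at h ⊢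
      simp only [Matrix.map_apply]
      rw [starRingEnd_apply, starRingEnd_apply, star_star, h, neg_neg]
    · exact hU.neg
  have hmul : ∀ X Y : Matrix ((Fin r ⊕ Fin ν) ⊕ (Fin r ⊕ Fin ν))
      ((Fin r ⊕ Fin ν) ⊕ (Fin r ⊕ Fin ν)) ℝ,
      (J * X * J) * (J * Y * J) = J * (X * Y) * J := by
    intro X Y
    simp only [mul_assoc]
    rw [← mul_assoc J J, hJ2, one_mul]
  refine ⟨fun X => J * X * J, fun T K V U _ _ => hform T K V U, hmem,
    ⟨hmem, fun X _ Y _ h => by simpa [hinv X, hinv Y] using congrArg (fun M => J * M * J) h,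
      fun Y hY => ⟨J * Y * J, hmem Y hY, hinv Y⟩⟩,
    fun X _ Y _ => by noncomm_ring,
    fun c X _ => by simp [Matrix.smul_mul, Matrix.mul_smul],
    fun X _ Y _ => by simp only [mul_sub, sub_mul, hmul],
    fun X _ => hinv X⟩
end

section
/- For all (Z,V), (Z',V') ∈ 𝒟, the matrix M := (Z − conj(Z'))/(2i) − Q(V,V') ∈ Mat_ν(ℂ) satisfies M + M* = (Im Z − Q(V,V)) + (Im Z' − Q(V',V')) + Q(V−V', V−V'), where M* denotes the conjugate transpose of M; in particular M + M* is positive definite Hermitian and M is invertible. -/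
open Matrix
open scoped ComplexOrder

/-- The Siegel domain `𝒟 ⊂ Sym_ν(ℂ) × Mat_{ν,r}(ℂ)`, realized inside the full matrix
space; membership includes the symmetry of `Z` and `Im Z − Q(V,V) ∈ Ω`, where `Ω`
is the cone of positive-definite real symmetric matrices. -/
noncomputable def SiegelD (ν r : ℕ) :
    Set (Matrix (Fin ν) (Fin ν) ℂ × Matrix (Fin ν) (Fin r) ℂ) :=
  {p | p.1.IsSymm ∧
    ((p.1.map Complex.im) - (Qmap ν r p.2 p.2).map Complex.re).PosDef}

lemma Qmap_sub_sub (ν r : ℕ) (V V' : Matrix (Fin ν) (Fin r) ℂ) :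
    Qmap ν r (V - V') (V - V') = Qmap ν r V V + Qmap ν r V' V' - Qmap ν r V V' - Qmap ν r V' V := by
  have h : (V - V').map (starRingEnd ℂ) = V.map (starRingEnd ℂ) - V'.map (starRingEnd ℂ) :=
    Matrix.map_sub _ (fun a b => by simp) _ _
  simp only [Qmap, h, Matrix.sub_mul, Matrix.mul_sub, Matrix.transpose_sub]
  module

lemma Qmap_conjTranspose (ν r : ℕ) (U W : Matrix (Fin ν) (Fin r) ℂ) :
    (Qmap ν r U W)ᴴ = Qmap ν r W U := by
  ext i j
  simp only [Qmap, conjTranspose_apply, Matrix.smul_apply, Matrix.add_apply, mul_apply, map_sum, _root_.map_mul,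
    map_apply, transpose_apply, smul_eq_mul, Complex.conj_conj, star_mul', star_add,
    RCLike.star_def, map_sum]
  rw [show (starRingEnd ℂ) (4:ℂ)⁻¹ = (4:ℂ)⁻¹ by norm_num [Complex.ext_iff]]
  have e1 : ∑ x, W j x * (starRingEnd ℂ) (U i x) = ∑ x, (starRingEnd ℂ) (U i x) * W j x :=
    Finset.sum_congr rfl (fun x _ => mul_comm _ _)
  have e2 : ∑ x, (starRingEnd ℂ) (U j x) * W i x = ∑ x, W i x * (starRingEnd ℂ) (U j x) :=
    Finset.sum_congr rfl (fun x _ => mul_comm _ _)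
  rw [e1, e2, add_comm]

lemma Qmap_self_real (ν r : ℕ) (V : Matrix (Fin ν) (Fin r) ℂ) :
    ((Qmap ν r V V).map Complex.re).map (fun x : ℝ => (x:ℂ)) = Qmap ν r V V := by
  ext i j
  simp only [Qmap, map_apply, Matrix.smul_apply, Matrix.add_apply, mul_apply, transpose_apply, smul_eq_mul]
  have : (∑ k, V i k * (starRingEnd ℂ) (V j k)) + ∑ k, (starRingEnd ℂ) (V i k) * V j k
      = ((2 * (∑ k, V i k * (starRingEnd ℂ) (V j k)).re : ℝ) : ℂ) := by
    rw [← Complex.add_conj]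
    congr 1
    simp [map_sum, mul_comm]
  rw [this]
  push_cast
  simp [Complex.ext_iff]

lemma Qmap_self_posSemidef (ν r : ℕ) (W : Matrix (Fin ν) (Fin r) ℂ) :
    (Qmap ν r W W).PosSemidef := by
  have hP : Qmap ν r W W = (4 : ℂ)⁻¹ • (W * Wᴴ + (W * Wᴴ)ᵀ) := by
    have h1 : (W.map (starRingEnd ℂ))ᵀ = Wᴴ := rfl
    have h2 : W.map (starRingEnd ℂ) * Wᵀ = (W * Wᴴ)ᵀ := by
      rw [Matrix.transpose_mul]; rfl
    rw [Qmap, h1, h2]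
  rw [posSemidef_iff_dotProduct_mulVec]
  constructor
  · exact Qmap_conjTranspose ν r W W
  · intro x
    rw [hP, smul_mulVec, dotProduct_smul, smul_eq_mul]
    refine mul_nonneg (by rw [Complex.le_def]; norm_num) ?_
    rw [add_mulVec, dotProduct_add]
    exact add_nonneg ((posSemidef_self_mul_conjTranspose W).dotProduct_mulVec_nonneg x)
      ((posSemidef_self_mul_conjTranspose W).transpose.dotProduct_mulVec_nonneg x)

lemma posDef_map_ofReal {n : ℕ} {R : Matrix (Fin n) (Fin n) ℝ} (hR : R.PosDef) :
    (R.map (fun x : ℝ => (x:ℂ))).PosDef := by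
  have hs : ∀ i j, R j i = R i j := fun i j => by simpa using hR.isHermitian.apply i j
  rw [posDef_iff_dotProduct_mulVec]
  constructor
  · ext i j
    simp [conjTranspose_apply, map_apply, Complex.conj_ofReal, hs i j]
  · intro x hx
    set a : Fin n → ℝ := fun i => (x i).re with ha
    set b : Fin n → ℝ := fun i => (x i).im with hb
    set S := star x ⬝ᵥ (R.map (fun x : ℝ => (x:ℂ))) *ᵥ x with hS
    have hSexp : S = ∑ i, ∑ j, (starRingEnd ℂ) (x i) * (R i j : ℂ) * x j := by
      simp only [hS, dotProduct, mulVec, Pi.star_apply, RCLike.star_def, map_apply,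
        Finset.mul_sum]
      exact Finset.sum_congr rfl fun i _ => Finset.sum_congr rfl fun j _ => by ring
    have him : S.im = 0 := by
      rw [hSexp, Complex.im_sum]
      simp only [Complex.im_sum]
      have h1 : ∀ i j, ((starRingEnd ℂ) (x i) * (R i j : ℂ) * x j).im
          = R i j * (a i * b j) - R i j * (b i * a j) := by
        intro i j
        simp [Complex.mul_im, Complex.mul_re, ha, hb]
        ring
      simp only [h1]
      simp only [Finset.sum_sub_distrib]
      rw [sub_eq_zero, Finset.sum_comm]
      exact Finset.sum_congr rfl fun i _ => Finset.sum_congr rfl fun j _ => by rw [hs]; ring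
    have hre : S.re = a ⬝ᵥ R *ᵥ a + b ⬝ᵥ R *ᵥ b := by
      rw [hSexp, Complex.re_sum]
      simp only [Complex.re_sum]
      have h1 : ∀ i j, ((starRingEnd ℂ) (x i) * (R i j : ℂ) * x j).re
          = R i j * (a i * a j) + R i j * (b i * b j) := by
        intro i j
        simp [Complex.mul_im, Complex.mul_re, ha, hb]
        ring
      simp only [h1]
      simp only [dotProduct, mulVec, Finset.mul_sum, Finset.sum_add_distrib]
      congr 1 <;> exact Finset.sum_congr rfl fun i _ => Finset.sum_congr rfl fun j _ => by ring
    have hab : a ≠ 0 ∨ b ≠ 0 := by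
      by_contra h
      push_neg at h
      obtain ⟨h1, h2⟩ := h
      apply hx
      funext i
      exact Complex.ext (by simpa [ha] using congrFun h1 i) (by simpa [hb] using congrFun h2 i)
    have hpos : 0 < a ⬝ᵥ R *ᵥ a + b ⬝ᵥ R *ᵥ b := by
      rcases hab with h | h
      · have := hR.dotProduct_mulVec_pos (x := a) (by simpa using h)
        have h2 := hR.posSemidef.dotProduct_mulVec_nonneg b
        simp only [star_trivial] at this h2
        linarith
      · have := hR.dotProduct_mulVec_pos (x := b) (by simpa using h)
        have h2 := hR.posSemidef.dotProduct_mulVec_nonneg a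
        simp only [star_trivial] at this h2
        linarith
    show (0:ℂ) < S
    rw [Complex.lt_def]
    constructor
    · simpa [hre] using hpos
    · simp [him]

lemma map_ofReal_add {n : ℕ} (A B : Matrix (Fin n) (Fin n) ℝ) :
    (A + B).map (fun x : ℝ => (x:ℂ)) = A.map (fun x : ℝ => (x:ℂ)) + B.map (fun x : ℝ => (x:ℂ)) := by
  ext i j; simp

lemma map_ofReal_sub {n : ℕ} (A B : Matrix (Fin n) (Fin n) ℝ) :
    (A - B).map (fun x : ℝ => (x:ℂ)) = A.map (fun x : ℝ => (x:ℂ)) - B.map (fun x : ℝ => (x:ℂ)) := by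
  ext i j; simp

lemma im_map_eq {n : ℕ} (Z : Matrix (Fin n) (Fin n) ℂ) :
    ((Z.map Complex.im).map (fun x : ℝ => (x:ℂ)))
      = (2 * Complex.I)⁻¹ • (Z - Z.map (starRingEnd ℂ)) := by
  ext i j
  simp only [map_apply, Matrix.smul_apply, Matrix.sub_apply, smul_eq_mul]
  rw [Complex.sub_conj]
  have : (2 * Complex.I) ≠ 0 := by simp [Complex.I_ne_zero]
  field_simp
  push_cast
  ring

/-- for `(Z,V), (Z',V') ∈ 𝒟` and `M := (Z − conj Z')/(2i) − Q(V,V')`,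
one has `M + M* = (Im Z − Q(V,V)) + (Im Z' − Q(V',V')) + Q(V−V', V−V')`; in particular
`M + M*` is positive definite (Hermitian) and `M` is invertible. -/
theorem siegel_kernel_matrix_invertible (ν r : ℕ) (hν : 0 < ν) (hr : 0 < r)
    (Z Z' : Matrix (Fin ν) (Fin ν) ℂ) (V V' : Matrix (Fin ν) (Fin r) ℂ)
    (hZV : (Z, V) ∈ SiegelD ν r) (hZV' : (Z', V') ∈ SiegelD ν r) :
    ∀ M : Matrix (Fin ν) (Fin ν) ℂ,
      M = (2 * Complex.I)⁻¹ • (Z - Z'.map (starRingEnd ℂ)) - Qmap ν r V V' →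
      (M + Mᴴ =
          (((Z.map Complex.im) - (Qmap ν r V V).map Complex.re) +
            ((Z'.map Complex.im) - (Qmap ν r V' V').map Complex.re)).map
              (fun x => (x : ℂ)) +
            Qmap ν r (V - V') (V - V') ∧
        (M + Mᴴ).PosDef ∧
        IsUnit M) := by
  intro M hM
  simp only [SiegelD, Set.mem_setOf_eq] at hZV hZV'
  obtain ⟨hZs, hR1⟩ := hZV
  obtain ⟨hZs', hR2⟩ := hZV'
  -- conjugate transpose of M
  have hZH : Zᴴ = Z.map (starRingEnd ℂ) := by
    ext i j
    simp only [conjTranspose_apply, map_apply, RCLike.star_def]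
    rw [show Z j i = Z i j from congrFun (congrFun hZs i) j]
  have hZ'H : (Z'.map (starRingEnd ℂ))ᴴ = Z' := by
    ext i j
    simp only [conjTranspose_apply, map_apply, RCLike.star_def, Complex.conj_conj]
    exact congrFun (congrFun hZs' i) j
  have hc : star ((2 * Complex.I)⁻¹) = -((2 * Complex.I)⁻¹) := by
    simp [Complex.ext_iff]
  have hMH : Mᴴ = (2 * Complex.I)⁻¹ • (Z' - Z.map (starRingEnd ℂ)) - Qmap ν r V' V := by
    rw [hM, conjTranspose_sub, conjTranspose_smul, conjTranspose_sub, hZH, hZ'H, hc,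
      Qmap_conjTranspose]
    module
  -- the key identity
  have heq : M + Mᴴ =
      (((Z.map Complex.im) - (Qmap ν r V V).map Complex.re) +
        ((Z'.map Complex.im) - (Qmap ν r V' V').map Complex.re)).map (fun x => (x : ℂ)) +
      Qmap ν r (V - V') (V - V') := by
    rw [hMH, hM, map_ofReal_add, map_ofReal_sub, map_ofReal_sub, Qmap_self_real, Qmap_self_real,
      im_map_eq, im_map_eq, Qmap_sub_sub]
    module
  refine ⟨heq, ?_, ?_⟩
  · rw [heq, map_ofReal_add]
    exact ((posDef_map_ofReal hR1).add (posDef_map_ofReal hR2)).add_posSemidef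
      (Qmap_self_posSemidef ν r (V - V'))
  · have hPD : (M + Mᴴ).PosDef := by
      rw [heq, map_ofReal_add]
      exact ((posDef_map_ofReal hR1).add (posDef_map_ofReal hR2)).add_posSemidef
        (Qmap_self_posSemidef ν r (V - V'))
    rw [← Matrix.mulVec_injective_iff_isUnit]
    intro u v huv
    by_contra hne
    have hz : M *ᵥ (u - v) = 0 := by rw [Matrix.mulVec_sub, huv, sub_self]
    have hne' : u - v ≠ 0 := sub_ne_zero.mpr hne
    have hpos := hPD.dotProduct_mulVec_pos hne'
    rw [add_mulVec, dotProduct_add, hz, dotProduct_zero, dotProduct_mulVec, ← star_mulVec,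
      hz, star_zero, zero_dotProduct, add_zero] at hpos
    exact lt_irrefl 0 hpos
end
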